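/- Let n be a nonempty finite type, 0 < α < 1, A an n×n real matrix, and x₀ ∈ ℝ^n. Then the function x(t) = E_α(t^α • A) · x₀ satisfies the Volterra integral equation of the fractional initial value problem: for every t ≥ 0, E_α(t^α • A) · x₀ = x₀ + (Γ(α))⁻¹ • ∫_0^t (t−s)^{α−1} • (A · (E_α(s^α • A) · x₀)) ds. -/

import Mathlib

open MeasureTheory Real

/-- The Mittag-Leffler matrix function `E_α(A) = ∑ A^k / Γ(αk+1)` of a real matrix. -/
noncomputable def mlMatR (α : ℝ) {n : Type*} [Fintype n] [DecidableEq n]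
    (A : Matrix n n ℝ) : Matrix n n ℝ :=
  ∑' k : ℕ, (Real.Gamma (α * k + 1))⁻¹ • A ^ k

lemma aux_geom_dom (R : ℝ) (hR : 1 ≤ R) :
    ∃ C : ℝ, 0 ≤ C ∧ ∀ m : ℕ, R ^ m / m.factorial ≤ C * (1 / 2) ^ m := by
  have hR0 : 0 < R := lt_of_lt_of_le one_pos hR
  set M : ℕ := ⌈2 * R⌉₊ with hM
  set g : ℕ → ℝ := fun m => R ^ m / m.factorial * 2 ^ m with hg
  have hg0 : ∀ m, 0 ≤ g m := fun m => by
    have : (0:ℝ) < m.factorial := by exact_mod_cast m.factorial_pos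
    positivity
  set C : ℝ := ∑ m ∈ Finset.range (M + 1), g m with hC
  have hle : ∀ m, m ≤ M → g m ≤ C := fun m hm =>
    Finset.single_le_sum (fun i _ => hg0 i) (Finset.mem_range.mpr (Nat.lt_succ_of_le hm))
  have hC0 : 0 ≤ C := Finset.sum_nonneg fun i _ => hg0 i
  have key : ∀ m, g m ≤ C := by
    intro m
    induction m with
    | zero => exact hle 0 (Nat.zero_le M)
    | succ m ih =>
      rcases le_or_gt (m + 1) M with h | h
      · exact hle _ h
      · have hm : M ≤ m := Nat.lt_succ_iff.mp h
        have hfac : (((m+1).factorial : ℝ)) = (m+1) * m.factorial := by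
          push_cast [Nat.factorial_succ]; ring
        have hmf : (0:ℝ) < m.factorial := by exact_mod_cast m.factorial_pos
        have hstep : g (m + 1) = g m * (2 * R / (m + 1)) := by
          simp only [hg, hfac, pow_succ]
          field_simp
        have h2R : 2 * R ≤ (m:ℝ) + 1 := by
          have h1 : 2 * R ≤ (M:ℝ) := Nat.le_ceil _
          have h2 : (M:ℝ) ≤ m := by exact_mod_cast hm
          linarith
        have hq : 2 * R / ((m:ℝ) + 1) ≤ 1 := by
          rw [div_le_one (by positivity)]
          exact h2R
        calc g (m+1) = g m * (2 * R / (m+1)) := hstep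
          _ ≤ g m * 1 := by
              apply mul_le_mul_of_nonneg_left _ (hg0 m)
              push_cast
              exact hq
          _ = g m := mul_one _
          _ ≤ C := ih
  refine ⟨C, hC0, fun m => ?_⟩
  have h2 : ((2:ℝ))^m * (1/2)^m = 1 := by
    rw [← mul_pow]; norm_num
  have : R ^ m / m.factorial = g m * (1/2)^m := by
    simp only [hg]; rw [mul_assoc, h2, mul_one]
  rw [this]
  exact mul_le_mul_of_nonneg_right (key m) (by positivity)

lemma ml_summable {α : ℝ} (hα0 : 0 < α) {r : ℝ} (hr : 0 ≤ r) :
    Summable (fun k : ℕ => (Real.Gamma (α * k + 1))⁻¹ * r ^ k) := by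
  set N : ℕ := ⌈α⁻¹⌉₊ + 1 with hN
  have hNα : α⁻¹ ≤ N := by
    have := Nat.le_ceil α⁻¹
    push_cast [hN]
    linarith
  set R : ℝ := (max 1 r) ^ N with hR
  have hR1 : 1 ≤ R := by
    calc (1:ℝ) = 1 ^ N := (one_pow N).symm
      _ ≤ (max 1 r) ^ N := pow_le_pow_left₀ zero_le_one (le_max_left 1 r) N
  obtain ⟨C, hC0, hC⟩ := aux_geom_dom R hR1
  set q : ℝ := (1/2 : ℝ) ^ α with hq
  have hq0 : 0 ≤ q := Real.rpow_nonneg (by norm_num) _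
  have hq1 : q < 1 := Real.rpow_lt_one (by norm_num) (by norm_num) hα0
  rw [← summable_nat_add_iff N]
  have hGpos : ∀ k : ℕ, 0 < Real.Gamma (α * k + 1) := fun k =>
    Real.Gamma_pos_of_pos (by positivity)
  apply Summable.of_nonneg_of_le
    (g := fun j : ℕ => (Real.Gamma (α * (j + N : ℕ) + 1))⁻¹ * r ^ (j + N))
    (fun j => mul_nonneg (inv_nonneg.mpr (hGpos _).le) (pow_nonneg hr _))
    _ ((summable_geometric_of_lt_one hq0 hq1).mul_left (R * C * 2))
  intro j
  set k : ℕ := j + N with hk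
  have hkN : N ≤ k := by omega
  have hk1 : (1:ℝ) ≤ α * k := by
    have h1 : α⁻¹ ≤ (k:ℝ) := hNα.trans (by exact_mod_cast hkN)
    calc (1:ℝ) = α * α⁻¹ := by field_simp
      _ ≤ α * k := by apply mul_le_mul_of_nonneg_left h1 hα0.le
  have hαk0 : (0:ℝ) ≤ α * k := by positivity
  set m : ℕ := ⌊α * (k:ℝ)⌋₊ with hm
  have hm1 : 1 ≤ m := Nat.le_floor (by exact_mod_cast hk1)
  have hfl : (m:ℝ) ≤ α * k := Nat.floor_le hαk0
  have hfl2 : α * (k:ℝ) < m + 1 := Nat.lt_floor_add_one _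
  have hG : (m.factorial : ℝ) ≤ Real.Gamma (α * k + 1) := by
    have h1 : ((m:ℝ) + 1) ∈ Set.Ici (2:ℝ) := by
      simp only [Set.mem_Ici]
      have : (1:ℝ) ≤ m := by exact_mod_cast hm1
      linarith
    have h2 : (α * (k:ℝ) + 1) ∈ Set.Ici (2:ℝ) := by
      simp only [Set.mem_Ici]; linarith
    have h3 := Real.Gamma_strictMonoOn_Ici.monotoneOn h1 h2 (by linarith)
    rwa [Real.Gamma_nat_eq_factorial m] at h3
  have hinv : (Real.Gamma (α * k + 1))⁻¹ ≤ ((m.factorial : ℝ))⁻¹ := by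
    have : (0:ℝ) < m.factorial := by exact_mod_cast m.factorial_pos
    gcongr
  have hrk : r ^ k ≤ R ^ (m + 1) := by
    have h1 : r ^ k ≤ (max 1 r) ^ k := pow_le_pow_left₀ hr (le_max_right 1 r) k
    have hkle : k ≤ N * (m + 1) := by
      have hcast : (k:ℝ) ≤ (N:ℝ) * ((m:ℝ) + 1) := by
        have e1 : (k:ℝ) = (α * k) * α⁻¹ := by field_simp
        have e2 : (α * (k:ℝ)) * α⁻¹ ≤ ((m:ℝ) + 1) * α⁻¹ :=
          mul_le_mul_of_nonneg_right hfl2.le (by positivity)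
        have e3 : ((m:ℝ) + 1) * α⁻¹ ≤ ((m:ℝ) + 1) * N :=
          mul_le_mul_of_nonneg_left hNα (by positivity)
        linarith [e2, e3, e1.le]
      have : (k:ℝ) ≤ ((N * (m+1) : ℕ) : ℝ) := by
        push_cast at hcast ⊢; linarith
      exact_mod_cast this
    calc r ^ k ≤ (max 1 r) ^ k := h1
      _ ≤ (max 1 r) ^ (N * (m+1)) := pow_le_pow_right₀ (le_max_left 1 r) hkle
      _ = R ^ (m + 1) := by rw [hR, ← pow_mul]
  have hmf : (0:ℝ) < m.factorial := by exact_mod_cast m.factorial_pos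
  have h6 : ((1:ℝ)/2)^m ≤ 2 * q ^ k := by
    have e1 : ((1:ℝ)/2)^m = (1/2 : ℝ) ^ ((m:ℝ)) := (Real.rpow_natCast _ m).symm
    have e2 : (1/2:ℝ) ^ ((m:ℝ)) ≤ (1/2:ℝ) ^ (α * (k:ℝ) - 1) :=
      Real.rpow_le_rpow_of_exponent_ge (by norm_num) (by norm_num) (by linarith)
    have e3 : (1/2:ℝ) ^ (α * (k:ℝ) - 1) = 2 * q ^ k := by
      rw [Real.rpow_sub (by norm_num), Real.rpow_one]
      rw [hq, ← Real.rpow_natCast ((1/2:ℝ) ^ α) k, ← Real.rpow_mul (by norm_num)]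
      ring
    rw [e1]; rw [e3] at e2; exact e2
  have main : (Real.Gamma (α * k + 1))⁻¹ * r ^ k ≤ (R * C * 2) * q ^ k := by
    calc (Real.Gamma (α * k + 1))⁻¹ * r ^ k
        ≤ ((m.factorial : ℝ))⁻¹ * R ^ (m+1) := by
          apply mul_le_mul hinv hrk (pow_nonneg hr k) (by positivity)
      _ = R * (R ^ m / m.factorial) := by rw [pow_succ]; field_simp
      _ ≤ R * (C * (1/2)^m) := by
          apply mul_le_mul_of_nonneg_left (hC m) (by linarith)
      _ ≤ R * (C * (2 * q ^ k)) := by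
          apply mul_le_mul_of_nonneg_left _ (by linarith)
          exact mul_le_mul_of_nonneg_left h6 hC0
      _ = (R * C * 2) * q ^ k := by ring
  calc (Real.Gamma (α * (k:ℕ) + 1))⁻¹ * r ^ (k:ℕ) ≤ (R * C * 2) * q ^ k := main
    _ ≤ (R * C * 2) * q ^ j := by
        apply mul_le_mul_of_nonneg_left _ (by positivity)
        apply pow_le_pow_of_le_one hq0 hq1.le
        omega

lemma betaIntegrable {p q : ℝ} (hp : 0 ≤ p) (hq : -1 < q) (T : ℝ) :
    IntervalIntegrable (fun s => s ^ p * (T - s) ^ q) volume 0 T := by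
  have h1 : IntervalIntegrable (fun s : ℝ => s ^ q) volume 0 T :=
    intervalIntegral.intervalIntegrable_rpow' hq
  have h2 := h1.comp_sub_left T
  have h2' : IntervalIntegrable (fun x : ℝ => (T - x) ^ q) volume 0 T := by
    have := h2.symm
    simpa using this
  exact h2'.continuousOn_mul (Real.continuous_rpow_const hp).continuousOn

lemma realBeta' {p q T : ℝ} (hp : -1 < p) (hq : -1 < q) (hT : 0 < T) :
    ∫ s in (0:ℝ)..T, s ^ p * (T - s) ^ q =
      Real.Gamma (p + 1) * Real.Gamma (q + 1) / Real.Gamma (p + q + 2) * T ^ (p + q + 1) := by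
  have hp1 : (0:ℝ) < p + 1 := by linarith
  have hq1 : (0:ℝ) < q + 1 := by linarith
  have hc : (∫ s in (0:ℝ)..T, ((s ^ p * (T - s) ^ q : ℝ) : ℂ)) =
      ((T:ℂ)) ^ ((((p:ℝ)+1 : ℝ):ℂ) + (((q:ℝ)+1 : ℝ):ℂ) - 1) *
        Complex.betaIntegral ((p+1:ℝ):ℂ) ((q+1:ℝ):ℂ) := by
    rw [← Complex.betaIntegral_scaled ((p+1:ℝ):ℂ) ((q+1:ℝ):ℂ) hT]
    apply intervalIntegral.integral_congr
    intro s hs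
    rw [Set.uIcc_of_le hT.le] at hs
    obtain ⟨h0s, hsT⟩ := hs
    simp only [Complex.ofReal_mul]
    rw [Complex.ofReal_cpow h0s, Complex.ofReal_cpow (by linarith : (0:ℝ) ≤ T - s)]
    push_cast
    ring_nf
  rw [intervalIntegral.integral_ofReal] at hc
  have hβ : Complex.betaIntegral ((p+1:ℝ):ℂ) ((q+1:ℝ):ℂ) =
      ((Real.Gamma (p+1) * Real.Gamma (q+1) / Real.Gamma (p+q+2) : ℝ) : ℂ) := by
    have h1 := Complex.Gamma_mul_Gamma_eq_betaIntegral
      (s := ((p+1:ℝ):ℂ)) (t := ((q+1:ℝ):ℂ)) (by simpa using hp1) (by simpa using hq1)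
    have h2 : Complex.Gamma (((p+1:ℝ):ℂ) + ((q+1:ℝ):ℂ)) ≠ 0 :=
      Complex.Gamma_ne_zero_of_re_pos (by
        simp only [Complex.add_re, Complex.ofReal_re]; linarith)
    have h3 : Complex.betaIntegral ((p+1:ℝ):ℂ) ((q+1:ℝ):ℂ) =
        Complex.Gamma ((p+1:ℝ):ℂ) * Complex.Gamma ((q+1:ℝ):ℂ) /
          Complex.Gamma (((p+1:ℝ):ℂ) + ((q+1:ℝ):ℂ)) := by
      rw [eq_div_iff h2]
      linear_combination -h1
    rw [h3]
    have e : (((p+1:ℝ):ℂ) + ((q+1:ℝ):ℂ)) = ((p+q+2 : ℝ):ℂ) := by push_cast; ring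
    rw [e, Complex.Gamma_ofReal, Complex.Gamma_ofReal, Complex.Gamma_ofReal]
    push_cast
    ring
  have hT' : ((T:ℂ)) ^ ((((p:ℝ)+1 : ℝ):ℂ) + (((q:ℝ)+1 : ℝ):ℂ) - 1) = ((T ^ (p+q+1) : ℝ) : ℂ) := by
    rw [Complex.ofReal_cpow hT.le]
    push_cast
    ring_nf
  rw [hβ, hT'] at hc
  have hc2 : ((∫ s in (0:ℝ)..T, s ^ p * (T - s) ^ q : ℝ) : ℂ) =
      ((Real.Gamma (p+1) * Real.Gamma (q+1) / Real.Gamma (p+q+2) * T ^ (p+q+1) : ℝ) : ℂ) := by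
    rw [hc]; push_cast; ring
  exact_mod_cast hc2

section matrixAux
variable {n : Type*} [Fintype n] [DecidableEq n]

/-- entrywise bound for matrix powers -/
lemma entry_bound (B : Matrix n n ℝ) (k : ℕ) :
    ∀ i j, |(B ^ k) i j| ≤ ((Fintype.card n : ℝ) * (∑ a, ∑ b, |B a b|)) ^ k := by
  set b : ℝ := ∑ a, ∑ b, |B a b| with hb
  have hb0 : 0 ≤ b := Finset.sum_nonneg fun a _ => Finset.sum_nonneg fun c _ => abs_nonneg _
  have hent : ∀ a c, |B a c| ≤ b := by
    intro a c
    calc |B a c| ≤ ∑ b', |B a b'| :=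
          Finset.single_le_sum (f := fun b' => |B a b'|)
            (fun i _ => abs_nonneg _) (Finset.mem_univ c)
      _ ≤ b := Finset.single_le_sum (f := fun a => ∑ b', |B a b'|)
          (fun i _ => Finset.sum_nonneg fun c' _ => abs_nonneg _) (Finset.mem_univ a)
  set C : ℝ := (Fintype.card n : ℝ) * b with hC
  have hC0 : 0 ≤ C := by positivity
  induction k with
  | zero =>
    intro i j
    simp only [pow_zero, Matrix.one_apply]
    split <;> simp
  | succ k ih =>
    intro i j
    rw [pow_succ, Matrix.mul_apply]
    calc |∑ l, (B ^ k) i l * B l j| ≤ ∑ l, |(B ^ k) i l * B l j| :=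
          Finset.abs_sum_le_sum_abs _ _
      _ ≤ ∑ _l : n, C ^ k * b := by
          apply Finset.sum_le_sum
          intro l _
          rw [abs_mul]
          exact mul_le_mul (ih i l) (hent l j) (abs_nonneg _) (by positivity)
      _ = (Fintype.card n : ℝ) * (C ^ k * b) := by
          rw [Finset.sum_const, Finset.card_univ]; simp [nsmul_eq_mul]
      _ = C ^ (k + 1) := by rw [pow_succ]; ring
end matrixAux

section clm
variable {n : Type*} [Fintype n] [DecidableEq n]

noncomputable def mulVecCLM (x : n → ℝ) : Matrix n n ℝ →L[ℝ] (n → ℝ) :=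
  LinearMap.toContinuousLinearMap
  { toFun := fun M => M.mulVec x
    map_add' := fun M N => Matrix.add_mulVec M N x
    map_smul' := fun c M => by simp [Matrix.smul_mulVec] }

@[simp] lemma mulVecCLM_apply (x : n → ℝ) (M : Matrix n n ℝ) :
    mulVecCLM x M = M.mulVec x := rfl

noncomputable def matVecCLM (A : Matrix n n ℝ) : (n → ℝ) →L[ℝ] (n → ℝ) :=
  LinearMap.toContinuousLinearMap A.mulVecLin

@[simp] lemma matVecCLM_apply (A : Matrix n n ℝ) (v : n → ℝ) :
    matVecCLM A v = A.mulVec v := rfl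
end clm

section series
variable {n : Type*} [Fintype n] [DecidableEq n]
variable {α : ℝ}

/-- summability of the matrix Mittag-Leffler series -/
lemma ml_mat_summable (hα0 : 0 < α) (B : Matrix n n ℝ) :
    Summable (fun k : ℕ => (Real.Gamma (α * k + 1))⁻¹ • B ^ k) := by
  set C : ℝ := (Fintype.card n : ℝ) * (∑ a, ∑ b, |B a b|) with hC
  have hC0 : 0 ≤ C := by
    have : (0:ℝ) ≤ ∑ a, ∑ b, |B a b| :=
      Finset.sum_nonneg fun a _ => Finset.sum_nonneg fun c _ => abs_nonneg _
    positivity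
  refine Pi.summable.mpr fun i => Pi.summable.mpr fun j => ?_
  apply Summable.of_norm_bounded (g := fun k : ℕ => (Real.Gamma (α * k + 1))⁻¹ * C ^ k)
    (ml_summable hα0 hC0)
  intro k
  have hG : (0:ℝ) < Real.Gamma (α * k + 1) := Real.Gamma_pos_of_pos (by positivity)
  have h1 := entry_bound B k i j
  calc ‖((Real.Gamma (α * k + 1))⁻¹ • B ^ k) i j‖
      = (Real.Gamma (α * k + 1))⁻¹ * |(B ^ k) i j| := by
        rw [Matrix.smul_apply, smul_eq_mul, Real.norm_eq_abs, abs_mul, abs_inv,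
          abs_of_nonneg hG.le]
    _ ≤ (Real.Gamma (α * k + 1))⁻¹ * C ^ k := by
        exact mul_le_mul_of_nonneg_left h1 (inv_nonneg.mpr hG.le)

/-- summability of the vector series -/
lemma ml_vec_summable (hα0 : 0 < α) (A : Matrix n n ℝ) (x : n → ℝ) {r : ℝ} (hr : 0 ≤ r) :
    Summable (fun k : ℕ => ((Real.Gamma (α * k + 1))⁻¹ * r ^ k) • (A ^ k).mulVec x) := by
  set C : ℝ := (Fintype.card n : ℝ) * (∑ a, ∑ b, |A a b|) with hC
  have hC0 : 0 ≤ C := by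
    have : (0:ℝ) ≤ ∑ a, ∑ b, |A a b| :=
      Finset.sum_nonneg fun a _ => Finset.sum_nonneg fun c _ => abs_nonneg _
    positivity
  set X : ℝ := ∑ j, |x j| with hX
  have hX0 : 0 ≤ X := Finset.sum_nonneg fun j _ => abs_nonneg _
  rw [Pi.summable]; intro i
  apply Summable.of_norm_bounded
    (g := fun k : ℕ => X * ((Real.Gamma (α * k + 1))⁻¹ * (r * C) ^ k))
    ((ml_summable hα0 (by positivity)).mul_left X)
  intro k
  have hG : (0:ℝ) < Real.Gamma (α * k + 1) := Real.Gamma_pos_of_pos (by positivity)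
  have hwb : |(A ^ k).mulVec x i| ≤ C ^ k * X := by
    rw [Matrix.mulVec, dotProduct]
    calc |∑ j, (A ^ k) i j * x j| ≤ ∑ j, |(A ^ k) i j * x j| :=
          Finset.abs_sum_le_sum_abs _ _
      _ ≤ ∑ j, C ^ k * |x j| := by
          apply Finset.sum_le_sum
          intro j _
          rw [abs_mul]
          exact mul_le_mul_of_nonneg_right (entry_bound A k i j) (abs_nonneg _)
      _ = C ^ k * X := by rw [← Finset.mul_sum]
  calc ‖(((Real.Gamma (α * k + 1))⁻¹ * r ^ k) • (A ^ k).mulVec x) i‖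
      = (Real.Gamma (α * k + 1))⁻¹ * r ^ k * |(A ^ k).mulVec x i| := by
        rw [Pi.smul_apply, smul_eq_mul, Real.norm_eq_abs, abs_mul,
          abs_of_nonneg (mul_nonneg (inv_nonneg.mpr hG.le) (pow_nonneg hr k))]
    _ ≤ (Real.Gamma (α * k + 1))⁻¹ * r ^ k * (C ^ k * X) := by
        apply mul_le_mul_of_nonneg_left hwb (by positivity)
    _ = X * ((Real.Gamma (α * k + 1))⁻¹ * (r * C) ^ k) := by
        rw [mul_pow]; ring

/-- series representation of the Mittag-Leffler mulVec -/
lemma ml_mulVec (hα0 : 0 < α) (A : Matrix n n ℝ) (x₀ : n → ℝ) {t : ℝ} (ht : 0 ≤ t) :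
    (mlMatR α ((t ^ α) • A)).mulVec x₀ =
      ∑' k : ℕ, ((Real.Gamma (α * k + 1))⁻¹ * t ^ (α * k)) • (A ^ k).mulVec x₀ := by
  have hsum := ml_mat_summable hα0 ((t ^ α) • A)
  calc (mlMatR α ((t ^ α) • A)).mulVec x₀
      = mulVecCLM x₀ (∑' k : ℕ, (Real.Gamma (α * k + 1))⁻¹ • ((t ^ α) • A) ^ k) := rfl
    _ = ∑' k : ℕ, mulVecCLM x₀ ((Real.Gamma (α * k + 1))⁻¹ • ((t ^ α) • A) ^ k) :=
        (mulVecCLM x₀).map_tsum hsum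
    _ = ∑' k : ℕ, ((Real.Gamma (α * k + 1))⁻¹ * t ^ (α * k)) • (A ^ k).mulVec x₀ := by
        apply tsum_congr
        intro k
        have hsc : (t ^ α) ^ k = t ^ (α * (k:ℝ)) := by
          rw [← Real.rpow_natCast (t ^ α) k, ← Real.rpow_mul ht]
        rw [mulVecCLM_apply, smul_pow, hsc, Matrix.smul_mulVec,
          Matrix.smul_mulVec, smul_smul]
end series

set_option maxHeartbeats 1000000 in
theorem mittagLeffler_solves_volterra {n : Type*} [Fintype n] [DecidableEq n] [Nonempty n]
    (α : ℝ) (hα0 : 0 < α) (hα1 : α < 1) (A : Matrix n n ℝ) (x₀ : n → ℝ) :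
    ∀ t : ℝ, 0 ≤ t →
      (mlMatR α ((t ^ α) • A)).mulVec x₀ =
        x₀ + (Real.Gamma α)⁻¹ •
          ∫ s in (0:ℝ)..t,
            ((t - s) ^ (α - 1)) • (A.mulVec ((mlMatR α ((s ^ α) • A)).mulVec x₀)) := by
  intro t ht
  rcases eq_or_lt_of_le ht with rfl | htpos
  · -- t = 0
    rw [intervalIntegral.integral_same, smul_zero, add_zero, ml_mulVec hα0 A x₀ le_rfl]
    rw [tsum_eq_single 0 ?_]
    · norm_num [Real.Gamma_one, Matrix.one_mulVec]
    · intro k hk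
      have hk0 : (0:ℝ) < (k:ℝ) := by
        have : 0 < k := Nat.pos_of_ne_zero hk
        exact_mod_cast this
      have h0 : (0:ℝ) ^ (α * (k:ℝ)) = 0 := Real.zero_rpow (by positivity)
      simp [h0]
  · -- t > 0
    have hGk : ∀ k : ℕ, (0:ℝ) < Real.Gamma (α * k + 1) := fun k =>
      Real.Gamma_pos_of_pos (by positivity)
    have hGk' : ∀ x : ℝ, 0 ≤ x → (0:ℝ) < Real.Gamma (x + 1) := fun x hx =>
      Real.Gamma_pos_of_pos (by linarith)
    have hGα : (0:ℝ) < Real.Gamma α := Real.Gamma_pos_of_pos hα0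
    have hsc : ∀ (u : ℝ), 0 ≤ u → ∀ k : ℕ, (u ^ α) ^ k = u ^ (α * (k:ℝ)) := by
      intro u hu k
      rw [← Real.rpow_natCast (u ^ α) k, ← Real.rpow_mul hu]
    -- constants
    set C : ℝ := (Fintype.card n : ℝ) * (∑ a, ∑ b, |A a b|) with hC
    have hC0 : 0 ≤ C := by
      have : (0:ℝ) ≤ ∑ a, ∑ b, |A a b| :=
        Finset.sum_nonneg fun a _ => Finset.sum_nonneg fun c _ => abs_nonneg _
      positivity
    set X : ℝ := ∑ j, |x₀ j| with hX
    have hX0 : 0 ≤ X := Finset.sum_nonneg fun j _ => abs_nonneg _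
    have hwb : ∀ m : ℕ, ‖(A ^ m).mulVec x₀‖ ≤ C ^ m * X := by
      intro m
      rw [pi_norm_le_iff_of_nonneg (by positivity)]
      intro i
      rw [Real.norm_eq_abs, Matrix.mulVec, dotProduct]
      calc |∑ j, (A ^ m) i j * x₀ j| ≤ ∑ j, |(A ^ m) i j * x₀ j| :=
            Finset.abs_sum_le_sum_abs _ _
        _ ≤ ∑ j, C ^ m * |x₀ j| := by
            apply Finset.sum_le_sum
            intro j _
            rw [abs_mul]
            exact mul_le_mul_of_nonneg_right (entry_bound A m i j) (abs_nonneg _)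
        _ = C ^ m * X := by rw [← Finset.mul_sum]
    -- integrand pieces
    set φ : ℕ → ℝ → ℝ := fun k s => s ^ (α * (k:ℝ)) * (t - s) ^ (α - 1) with hφ
    set F : ℕ → ℝ → (n → ℝ) :=
      fun k s => ((Real.Gamma (α * k + 1))⁻¹ * φ k s) • (A ^ (k+1)).mulVec x₀ with hF
    -- Step A: integrand equality on Ioc 0 t
    have hInt : ∀ s ∈ Set.Ioc (0:ℝ) t,
        ((t - s) ^ (α - 1)) • (A.mulVec ((mlMatR α ((s ^ α) • A)).mulVec x₀)) =
          ∑' k : ℕ, F k s := by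
      intro s hs
      obtain ⟨hs0, hst⟩ := hs
      rw [ml_mulVec hα0 A x₀ hs0.le]
      have hsum : Summable (fun k : ℕ =>
          ((Real.Gamma (α * k + 1))⁻¹ * s ^ (α * (k:ℝ))) • (A ^ k).mulVec x₀) := by
        apply (ml_vec_summable hα0 A x₀ (Real.rpow_nonneg hs0.le α)).congr
        intro k
        rw [hsc s hs0.le k]
      set L : (n → ℝ) →L[ℝ] (n → ℝ) := ((t - s) ^ (α - 1)) • matVecCLM A with hL
      have hLapp : ∀ v, L v = ((t - s) ^ (α - 1)) • A.mulVec v := fun v => rfl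
      calc ((t - s) ^ (α - 1)) •
            A.mulVec (∑' k : ℕ, ((Real.Gamma (α * k + 1))⁻¹ * s ^ (α * (k:ℝ))) • (A ^ k).mulVec x₀)
          = L (∑' k : ℕ, ((Real.Gamma (α * k + 1))⁻¹ * s ^ (α * (k:ℝ))) • (A ^ k).mulVec x₀) :=
            (hLapp _).symm
        _ = ∑' k : ℕ, L (((Real.Gamma (α * k + 1))⁻¹ * s ^ (α * (k:ℝ))) • (A ^ k).mulVec x₀) :=
            L.map_tsum hsum
        _ = ∑' k : ℕ, F k s := by
            apply tsum_congr
            intro k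
            rw [hLapp, Matrix.mulVec_smul, Matrix.mulVec_mulVec, ← pow_succ']
            rw [smul_smul]
            simp only [hF, hφ]
            congr 1
            ring
    -- integrability of φ k
    have hφ_int : ∀ k : ℕ, IntervalIntegrable (φ k) volume 0 t := fun k =>
      betaIntegrable (by positivity) (by linarith) t
    have hφ_int' : ∀ k : ℕ, IntegrableOn (φ k) (Set.Ioc 0 t) volume := fun k =>
      (intervalIntegrable_iff_integrableOn_Ioc_of_le ht).mp (hφ_int k)
    have hφ_nonneg : ∀ (k : ℕ), ∀ s ∈ Set.Ioc (0:ℝ) t, 0 ≤ φ k s := fun k s hs =>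
      mul_nonneg (Real.rpow_nonneg hs.1.le _) (Real.rpow_nonneg (by linarith [hs.2]) _)
    -- the Beta integral value
    have hIk : ∀ k : ℕ, ∫ s in (0:ℝ)..t, φ k s =
        Real.Gamma (α * k + 1) * Real.Gamma α / Real.Gamma (α * ((k:ℝ) + 1) + 1)
          * t ^ (α * ((k:ℝ) + 1)) := by
      intro k
      have h := realBeta' (p := α * (k:ℝ)) (q := α - 1)
        (by have := mul_nonneg hα0.le (Nat.cast_nonneg k); linarith) (by linarith) htpos
      simp only [hφ]
      rw [h, show α * (k:ℝ) + (α - 1) + 2 = α * ((k:ℝ) + 1) + 1 by ring,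
        show α * (k:ℝ) + (α - 1) + 1 = α * ((k:ℝ) + 1) by ring,
        show α - 1 + 1 = α by ring]
    -- integrability of F k
    have hF_int : ∀ k : ℕ, Integrable (F k) (volume.restrict (Set.Ioc 0 t)) := fun k =>
      ((hφ_int' k).const_mul _).smul_const _
    -- value of the norm integrals
    have hF_norm : ∀ k : ℕ, ∫ s in Set.Ioc (0:ℝ) t, ‖F k s‖ =
        ((Real.Gamma (α * k + 1))⁻¹ * ∫ s in (0:ℝ)..t, φ k s) * ‖(A ^ (k+1)).mulVec x₀‖ := by
      intro k
      have h1 : ∀ s ∈ Set.Ioc (0:ℝ) t, ‖F k s‖ =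
          ((Real.Gamma (α * k + 1))⁻¹ * φ k s) * ‖(A ^ (k+1)).mulVec x₀‖ := by
        intro s hs
        simp only [hF]
        rw [norm_smul, Real.norm_eq_abs,
          abs_of_nonneg (mul_nonneg (inv_nonneg.mpr (hGk k).le) (hφ_nonneg k s hs))]
      rw [setIntegral_congr_fun measurableSet_Ioc h1, integral_mul_const, integral_const_mul,
        intervalIntegral.integral_of_le ht]
    -- summability of the norm integrals
    have hρ0 : (0:ℝ) ≤ t ^ α * C := mul_nonneg (Real.rpow_nonneg ht α) hC0
    have hF_sum : Summable (fun k : ℕ => ∫ s in Set.Ioc (0:ℝ) t, ‖F k s‖) := by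
      have hbound : ∀ k : ℕ, ∫ s in Set.Ioc (0:ℝ) t, ‖F k s‖ ≤
          (Real.Gamma α * X) *
            ((Real.Gamma (α * ((k+1 : ℕ):ℝ) + 1))⁻¹ * (t ^ α * C) ^ (k+1)) := by
        intro k
        rw [hF_norm k, hIk k]
        have e1 : (Real.Gamma (α * k + 1))⁻¹ *
            (Real.Gamma (α * k + 1) * Real.Gamma α / Real.Gamma (α * ((k:ℝ) + 1) + 1)
              * t ^ (α * ((k:ℝ) + 1)))
            = Real.Gamma α * ((Real.Gamma (α * ((k:ℝ) + 1) + 1))⁻¹ * t ^ (α * ((k:ℝ) + 1))) := by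
          have h2 : Real.Gamma (α * k + 1) ≠ 0 := (hGk k).ne'
          field_simp
        rw [e1]
        have e2 : t ^ (α * ((k:ℝ) + 1)) = (t ^ α) ^ (k+1) := by
          rw [hsc t ht (k+1)]
          push_cast
          ring_nf
        have hGkk : (0:ℝ) < Real.Gamma (α * ((k:ℝ) + 1) + 1) :=
          Real.Gamma_pos_of_pos (by positivity)
        calc Real.Gamma α * ((Real.Gamma (α * ((k:ℝ) + 1) + 1))⁻¹ * t ^ (α * ((k:ℝ) + 1)))
              * ‖(A ^ (k+1)).mulVec x₀‖
            ≤ Real.Gamma α * ((Real.Gamma (α * ((k:ℝ) + 1) + 1))⁻¹ * t ^ (α * ((k:ℝ) + 1)))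
              * (C ^ (k+1) * X) := by
              apply mul_le_mul_of_nonneg_left (hwb (k+1))
              have := Real.rpow_nonneg ht (α * ((k:ℝ) + 1))
              positivity
          _ = (Real.Gamma α * X) *
              ((Real.Gamma (α * ((k+1 : ℕ):ℝ) + 1))⁻¹ * (t ^ α * C) ^ (k+1)) := by
              rw [e2, mul_pow]
              push_cast
              ring
      apply Summable.of_nonneg_of_le
        (fun k => integral_nonneg fun s => norm_nonneg _) hbound
      have base : Summable (fun m : ℕ => (Real.Gamma (α * m + 1))⁻¹ * (t ^ α * C) ^ m) :=
        ml_summable hα0 hρ0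
      have shifted : Summable (fun k : ℕ =>
          (Real.Gamma (α * ((k+1 : ℕ):ℝ) + 1))⁻¹ * (t ^ α * C) ^ (k+1)) :=
        (summable_nat_add_iff 1).mpr base
      exact shifted.mul_left _
    -- Step B+C+D : swap integral and sum
    have hswap : (∫ s in (0:ℝ)..t,
          ((t - s) ^ (α - 1)) • (A.mulVec ((mlMatR α ((s ^ α) • A)).mulVec x₀)))
        = ∑' k : ℕ, ((Real.Gamma (α * k + 1))⁻¹ * ∫ s in (0:ℝ)..t, φ k s)
            • (A ^ (k+1)).mulVec x₀ := by
      rw [intervalIntegral.integral_of_le ht, setIntegral_congr_fun measurableSet_Ioc hInt,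
        ← MeasureTheory.integral_tsum_of_summable_integral_norm hF_int hF_sum]
      apply tsum_congr
      intro k
      simp only [hF]
      rw [integral_smul_const, integral_const_mul, intervalIntegral.integral_of_le ht]
    -- final assembly
    rw [ml_mulVec hα0 A x₀ ht, hswap]
    simp only [hIk]
    rw [← tsum_const_smul'' ((Real.Gamma α)⁻¹)]
    have hsummable_t : Summable (fun k : ℕ =>
        ((Real.Gamma (α * k + 1))⁻¹ * t ^ (α * (k:ℝ))) • (A ^ k).mulVec x₀) := by
      apply (ml_vec_summable hα0 A x₀ (Real.rpow_nonneg ht α)).congr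
      intro k
      rw [hsc t ht k]
    rw [Summable.tsum_eq_zero_add hsummable_t]
    have hzero : ((Real.Gamma (α * (0:ℕ) + 1))⁻¹ * t ^ (α * ((0:ℕ):ℝ))) • (A ^ 0).mulVec x₀
        = x₀ := by
      norm_num [Real.Gamma_one, Matrix.one_mulVec]
    rw [hzero]
    congr 1
    apply tsum_congr
    intro k
    rw [smul_smul]
    congr 1
    have h2 : Real.Gamma (α * k + 1) ≠ 0 := (hGk k).ne'
    have h3 : Real.Gamma α ≠ 0 := hGα.ne'
    have h4 : Real.Gamma (α * ((k:ℝ) + 1) + 1) ≠ 0 :=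
      (Real.Gamma_pos_of_pos (by positivity)).ne'
    push_cast
    field_simp
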